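/- Let Λ = Z_p[[T]], let f, g ∈ Λ be such that 0 → Λ/(f) → X → Λ/(g) → 0 is an exact sequence of Λ-modules, and suppose X/TX is finite. Then |X/TX|/|X[T]| = |f(0)·g(0)|_p^{-1}. -/

import Mathlib

open PowerSeries
set_option synthInstance.maxHeartbeats 400000
set_option maxHeartbeats 1000000
variable {p : ℕ} [hp : Fact p.Prime]

lemma aux_cancel (a : PowerSeries ℤ_[p]) (ha : constantCoeff (R := ℤ_[p]) a ≠ 0)
    (h : PowerSeries ℤ_[p]) (hm : (X : PowerSeries ℤ_[p]) * h ∈ Ideal.span {a}) :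
    h ∈ Ideal.span {a} := by
  obtain ⟨k, hk⟩ := Ideal.mem_span_singleton.mp hm
  have hc : (0 : ℤ_[p]) = constantCoeff (R := ℤ_[p]) a * constantCoeff (R := ℤ_[p]) k := by
    have := congrArg (constantCoeff (R := ℤ_[p])) hk
    simpa using this
  have hk0 : constantCoeff (R := ℤ_[p]) k = 0 := by
    rcases mul_eq_zero.mp hc.symm with h1 | h1
    · exact absurd h1 ha
    · exact h1
  obtain ⟨m, rfl⟩ := X_dvd_iff.mpr hk0
  have : (X : PowerSeries ℤ_[p]) * h = X * (a * m) := by rw [hk]; ring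
  have := mul_left_cancel₀ (X_ne_zero (R := ℤ_[p])) this
  exact Ideal.mem_span_singleton.mpr ⟨m, this⟩

lemma aux_tors (a : PowerSeries ℤ_[p]) (ha : constantCoeff (R := ℤ_[p]) a ≠ 0)
    (y : PowerSeries ℤ_[p] ⧸ Ideal.span {a}) (hy : (X : PowerSeries ℤ_[p]) • y = 0) : y = 0 := by
  obtain ⟨h, rfl⟩ := Ideal.Quotient.mk_surjective y
  have h1 : Ideal.Quotient.mk (Ideal.span {a}) ((X : PowerSeries ℤ_[p]) * h) = 0 := hy
  have h2 := Ideal.Quotient.eq_zero_iff_mem.mp h1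
  exact Ideal.Quotient.eq_zero_iff_mem.mpr (aux_cancel a ha h h2)

lemma aux_quot_equiv (a : PowerSeries ℤ_[p]) :
    Nonempty ((((PowerSeries ℤ_[p]) ⧸ Ideal.span {a}) ⧸ LinearMap.range
        (LinearMap.lsmul (PowerSeries ℤ_[p]) ((PowerSeries ℤ_[p]) ⧸ Ideal.span {a}) PowerSeries.X)) ≃
      (ℤ_[p] ⧸ Ideal.span {PowerSeries.constantCoeff (R := ℤ_[p]) a})) := by
  letI : Module (PowerSeries ℤ_[p]) (ℤ_[p] ⧸ Ideal.span {PowerSeries.constantCoeff (R := ℤ_[p]) a}) :=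
    Module.compHom _ (PowerSeries.constantCoeff (R := ℤ_[p]))
  let θ0 : PowerSeries ℤ_[p] →ₗ[PowerSeries ℤ_[p]]
      (ℤ_[p] ⧸ Ideal.span {PowerSeries.constantCoeff (R := ℤ_[p]) a}) :=
    { toFun := fun h => Ideal.Quotient.mk _ (PowerSeries.constantCoeff (R := ℤ_[p]) h)
      map_add' := fun x y => by simp
      map_smul' := fun r x => by
        show Ideal.Quotient.mk _ ((constantCoeff (R := ℤ_[p])) (r * x)) = _
        rw [map_mul]
        rfl }
  have hle : Ideal.span {a} ≤ LinearMap.ker θ0 := by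
    rw [Ideal.span_le]
    intro x hx
    rw [Set.mem_singleton_iff] at hx
    rw [SetLike.mem_coe, LinearMap.mem_ker]
    show Ideal.Quotient.mk _ ((constantCoeff (R := ℤ_[p])) x) = 0
    rw [hx]
    exact Ideal.Quotient.eq_zero_iff_mem.mpr (Ideal.mem_span_singleton_self _)
  let θ := (Ideal.span {a}).liftQ θ0 hle
  have happ : ∀ h : PowerSeries ℤ_[p], θ (Ideal.Quotient.mk _ h) =
      Ideal.Quotient.mk _ ((constantCoeff (R := ℤ_[p])) h) := fun h => rfl
  have hsurj : Function.Surjective θ := by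
    intro q
    obtain ⟨z, rfl⟩ := Ideal.Quotient.mk_surjective q
    exact ⟨Ideal.Quotient.mk _ (PowerSeries.C (R := ℤ_[p]) z), by rw [happ, constantCoeff_C]⟩
  have hker : LinearMap.ker θ = LinearMap.range
      (LinearMap.lsmul (PowerSeries ℤ_[p]) ((PowerSeries ℤ_[p]) ⧸ Ideal.span {a}) PowerSeries.X) := by
    ext y
    obtain ⟨h, rfl⟩ := Ideal.Quotient.mk_surjective y
    constructor
    · intro hy
      rw [LinearMap.mem_ker, happ, Ideal.Quotient.eq_zero_iff_mem] at hy
      obtain ⟨u, hu⟩ := Ideal.mem_span_singleton.mp hy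
      have hX : (X : PowerSeries ℤ_[p]) ∣ (h - a * PowerSeries.C (R := ℤ_[p]) u) := by
        rw [X_dvd_iff]
        simp [hu]
      obtain ⟨m, hm⟩ := hX
      refine ⟨Ideal.Quotient.mk _ m, ?_⟩
      show (X : PowerSeries ℤ_[p]) • Ideal.Quotient.mk (Ideal.span {a}) m = _
      have : Ideal.Quotient.mk (Ideal.span {a}) ((X : PowerSeries ℤ_[p]) * m) =
          Ideal.Quotient.mk _ h := by
        rw [← hm]
        rw [Ideal.Quotient.mk_eq_mk_iff_sub_mem]
        simpa using Ideal.mul_mem_right (PowerSeries.C (R := ℤ_[p]) u) _ (Ideal.mem_span_singleton_self a)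
      exact this
    · rintro ⟨z, hz⟩
      obtain ⟨m, rfl⟩ := Ideal.Quotient.mk_surjective z
      rw [LinearMap.mem_ker, ← hz]
      show θ (Ideal.Quotient.mk _ ((X : PowerSeries ℤ_[p]) * m)) = 0
      rw [happ, map_mul, constantCoeff_X, zero_mul, map_zero]
  exact ⟨((Submodule.quotEquivOfEq _ _ hker.symm).trans
    (LinearMap.quotKerEquivOfSurjective θ hsurj)).toEquiv⟩



lemma aux_toZModPow_surj (n : ℕ) : Function.Surjective (PadicInt.toZModPow (p := p) n) := by
  intro y
  refine ⟨((y.val : ℕ) : ℤ_[p]), ?_⟩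
  rw [map_natCast, ZMod.natCast_val, ZMod.cast_id]

lemma aux_padic_card (a : ℤ_[p]) (ha : a ≠ 0) :
    (Nat.card (ℤ_[p] ⧸ Ideal.span {a}) : ℝ) = ‖a‖⁻¹ := by
  set n := a.valuation with hn
  have hval : (n : ℤ) = a.valuation := rfl
  have hspan : Ideal.span {a} = Ideal.span {(p : ℤ_[p]) ^ n} := by
    rw [Ideal.span_singleton_eq_span_singleton]
    exact (Associated.symm ⟨PadicInt.unitCoeff ha, (mul_comm _ _).trans (PadicInt.unitCoeff_spec ha).symm⟩)
  have e : (ℤ_[p] ⧸ Ideal.span {a}) ≃+* ZMod (p ^ n) :=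
    (Ideal.quotEquivOfEq (hspan.trans (by rw [← PadicInt.ker_toZModPow]))).trans
      (RingHom.quotientKerEquivOfSurjective (aux_toZModPow_surj n))
  have hcard : Nat.card (ℤ_[p] ⧸ Ideal.span {a}) = p ^ n := by
    rw [Nat.card_congr e.toEquiv, Nat.card_zmod]
  rw [hcard, PadicInt.norm_eq_zpow_neg_valuation ha]
  have hp0 : (0:ℝ) < (p:ℝ) := by exact_mod_cast hp.1.pos
  push_cast
  rw [zpow_neg, inv_inv, zpow_natCast]

lemma aux_padic_infinite : Infinite (ℤ_[p] ⧸ Ideal.span {(0 : ℤ_[p])}) := by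
  have : Function.Injective (Ideal.Quotient.mk (Ideal.span {(0 : ℤ_[p])})) := by
    intro x y h
    have := Ideal.Quotient.eq.mp h
    rw [Ideal.span_singleton_eq_bot.mpr rfl, Submodule.mem_bot, sub_eq_zero] at this
    exact this
  exact Infinite.of_injective _ this

set_option maxHeartbeats 2000000 in
/-- Let `Λ = ℤ_p[[T]]` and let `f, g ∈ Λ` be such that
`0 → Λ/(f) → X → Λ/(g) → 0` is an exact sequence of `Λ`-modules, and suppose `X/TX`
is finite.  Then `|X/TX| / |X[T]| = |f(0)·g(0)|_p⁻¹`. -/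
theorem stmt_5 {p : ℕ} [Fact p.Prime] {X : Type*} [AddCommGroup X]
    [Module (PowerSeries ℤ_[p]) X]
    (f g : PowerSeries ℤ_[p])
    (ι : (PowerSeries ℤ_[p] ⧸ Ideal.span {f}) →ₗ[PowerSeries ℤ_[p]] X)
    (π : X →ₗ[PowerSeries ℤ_[p]] (PowerSeries ℤ_[p] ⧸ Ideal.span {g}))
    (hι : Function.Injective ι) (hπ : Function.Surjective π)
    (hexact : LinearMap.range ι = LinearMap.ker π)
    (hfin : Finite (X ⧸ LinearMap.range
      (LinearMap.lsmul (PowerSeries ℤ_[p]) X (PowerSeries.X)))) :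
    (Nat.card (X ⧸ LinearMap.range
        (LinearMap.lsmul (PowerSeries ℤ_[p]) X (PowerSeries.X))) : ℝ) /
      (Nat.card (LinearMap.ker
        (LinearMap.lsmul (PowerSeries ℤ_[p]) X (PowerSeries.X))) : ℝ) =
    ‖PowerSeries.constantCoeff (R := ℤ_[p]) f * PowerSeries.constantCoeff (R := ℤ_[p]) g‖⁻¹ := by
  classical
  set SX : Submodule (PowerSeries ℤ_[p]) X :=
    LinearMap.range (LinearMap.lsmul (PowerSeries ℤ_[p]) X PowerSeries.X) with hSX
  set Sg : Submodule (PowerSeries ℤ_[p]) (PowerSeries ℤ_[p] ⧸ Ideal.span {g}) :=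
    LinearMap.range (LinearMap.lsmul (PowerSeries ℤ_[p])
      (PowerSeries ℤ_[p] ⧸ Ideal.span {g}) PowerSeries.X) with hSg
  set Sf : Submodule (PowerSeries ℤ_[p]) (PowerSeries ℤ_[p] ⧸ Ideal.span {f}) :=
    LinearMap.range (LinearMap.lsmul (PowerSeries ℤ_[p])
      (PowerSeries ℤ_[p] ⧸ Ideal.span {f}) PowerSeries.X) with hSf
  set δ : X →ₗ[PowerSeries ℤ_[p]] ((PowerSeries ℤ_[p] ⧸ Ideal.span {g}) ⧸ Sg) :=
    Sg.mkQ ∘ₗ π with hδ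
  have hδs : Function.Surjective δ := (Submodule.mkQ_surjective Sg).comp hπ
  have hle1 : SX ≤ LinearMap.ker δ := by
    rintro _ ⟨x, rfl⟩
    rw [LinearMap.mem_ker, LinearMap.lsmul_apply]
    show Sg.mkQ (π ((PowerSeries.X : PowerSeries ℤ_[p]) • x)) = 0
    rw [map_smul, Submodule.mkQ_apply, Submodule.Quotient.mk_eq_zero]
    exact ⟨π x, rfl⟩
  set ε : (X ⧸ SX) →ₗ[PowerSeries ℤ_[p]] ((PowerSeries ℤ_[p] ⧸ Ideal.span {g}) ⧸ Sg) :=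
    SX.liftQ δ hle1 with hε
  have hεs : Function.Surjective ε := by
    intro q
    obtain ⟨x, rfl⟩ := hδs q
    exact ⟨SX.mkQ x, rfl⟩
  have hfinG : Finite ((PowerSeries ℤ_[p] ⧸ Ideal.span {g}) ⧸ Sg) := Finite.of_surjective ε hεs
  have hg0 : PowerSeries.constantCoeff (R := ℤ_[p]) g ≠ 0 := by
    intro h0
    obtain ⟨e⟩ := aux_quot_equiv g
    rw [h0] at e
    have : Finite (ℤ_[p] ⧸ Ideal.span {(0 : ℤ_[p])}) := Finite.of_equiv _ e
    exact this.not_infinite aux_padic_infinite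
  have tors_g := aux_tors g hg0
  have hπι : ∀ y, π (ι y) = 0 := by
    intro y
    have : ι y ∈ LinearMap.ker π := hexact ▸ LinearMap.mem_range_self ι y
    exact this
  set μ : (PowerSeries ℤ_[p] ⧸ Ideal.span {f}) →ₗ[PowerSeries ℤ_[p]] (X ⧸ SX) :=
    SX.mkQ ∘ₗ ι with hμ
  have hkerμ : LinearMap.ker μ = Sf := by
    ext y
    constructor
    · intro hy
      rw [LinearMap.mem_ker] at hy
      have : ι y ∈ SX := by
        rw [← Submodule.Quotient.mk_eq_zero]
        exact hy
      obtain ⟨x, hx⟩ := this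
      have hx' : (PowerSeries.X : PowerSeries ℤ_[p]) • x = ι y := by
        rw [← hx, LinearMap.lsmul_apply]
      have hπx : (PowerSeries.X : PowerSeries ℤ_[p]) • π x = 0 := by
        rw [← map_smul, hx', hπι]
      have hx0 : π x = 0 := tors_g _ hπx
      have : x ∈ LinearMap.range ι := hexact ▸ LinearMap.mem_ker.mpr hx0
      obtain ⟨z, hz⟩ := this
      have : ι y = ι ((PowerSeries.X : PowerSeries ℤ_[p]) • z) := by rw [map_smul, hz, hx']
      exact ⟨z, (hι this).symm⟩
    · rintro ⟨z, rfl⟩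
      rw [LinearMap.mem_ker, LinearMap.lsmul_apply]
      show SX.mkQ (ι ((PowerSeries.X : PowerSeries ℤ_[p]) • z)) = 0
      rw [map_smul, Submodule.mkQ_apply, Submodule.Quotient.mk_eq_zero]
      exact ⟨ι z, rfl⟩
  set ν : ((PowerSeries ℤ_[p] ⧸ Ideal.span {f}) ⧸ Sf) →ₗ[PowerSeries ℤ_[p]] (X ⧸ SX) :=
    Sf.liftQ μ (le_of_eq hkerμ.symm) with hν
  have hνinj : Function.Injective ν := by
    rw [← LinearMap.ker_eq_bot]
    exact Submodule.ker_liftQ_eq_bot' Sf μ hkerμ.symm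
  have hfinF : Finite ((PowerSeries ℤ_[p] ⧸ Ideal.span {f}) ⧸ Sf) :=
    Finite.of_injective ν hνinj
  have hf0 : PowerSeries.constantCoeff (R := ℤ_[p]) f ≠ 0 := by
    intro h0
    obtain ⟨e⟩ := aux_quot_equiv f
    rw [h0] at e
    have : Finite (ℤ_[p] ⧸ Ideal.span {(0 : ℤ_[p])}) := Finite.of_equiv _ e
    exact this.not_infinite aux_padic_infinite
  have tors_f := aux_tors f hf0
  have hker0 : LinearMap.ker (LinearMap.lsmul (PowerSeries ℤ_[p]) X PowerSeries.X) = ⊥ := by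
    rw [Submodule.eq_bot_iff]
    intro x hx
    rw [LinearMap.mem_ker, LinearMap.lsmul_apply] at hx
    have hπx : (PowerSeries.X : PowerSeries ℤ_[p]) • π x = 0 := by rw [← map_smul, hx, map_zero]
    have hx0 : π x = 0 := tors_g _ hπx
    have : x ∈ LinearMap.range ι := hexact ▸ LinearMap.mem_ker.mpr hx0
    obtain ⟨z, rfl⟩ := this
    have : ι ((PowerSeries.X : PowerSeries ℤ_[p]) • z) = ι 0 := by rw [map_smul, hx, map_zero]
    have hz0 : (PowerSeries.X : PowerSeries ℤ_[p]) • z = 0 := hι this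
    rw [tors_f z hz0, map_zero]
  have hcardker :
      Nat.card (LinearMap.ker (LinearMap.lsmul (PowerSeries ℤ_[p]) X PowerSeries.X)) = 1 := by
    rw [hker0]
    exact Nat.card_unique
  have hkerδ : LinearMap.ker δ = LinearMap.range ι ⊔ SX := by
    ext x
    constructor
    · intro hx
      rw [LinearMap.mem_ker] at hx
      have : π x ∈ Sg := by
        rw [← Submodule.Quotient.mk_eq_zero]
        exact hx
      obtain ⟨w, hw⟩ := this
      obtain ⟨x', hx'⟩ := hπ w
      have hsub : π (x - (PowerSeries.X : PowerSeries ℤ_[p]) • x') = 0 := by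
        rw [map_sub, map_smul, hx']
        rw [LinearMap.lsmul_apply] at hw
        rw [hw, sub_self]
      have h1 : x - (PowerSeries.X : PowerSeries ℤ_[p]) • x' ∈ LinearMap.range ι :=
        hexact ▸ LinearMap.mem_ker.mpr hsub
      have h2 : (PowerSeries.X : PowerSeries ℤ_[p]) • x' ∈ SX := ⟨x', rfl⟩
      have := Submodule.add_mem _ (Submodule.mem_sup_left h1) (Submodule.mem_sup_right h2)
      simpa using this
    · intro hx
      rw [LinearMap.mem_ker]
      obtain ⟨u, hu, v, hv, rfl⟩ := Submodule.mem_sup.mp hx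
      obtain ⟨z, rfl⟩ := hu
      obtain ⟨w, hw⟩ := hv
      rw [LinearMap.lsmul_apply] at hw
      subst hw
      show Sg.mkQ (π (ι z + (PowerSeries.X : PowerSeries ℤ_[p]) • w)) = 0
      rw [map_add, map_smul, hπι, zero_add, Submodule.mkQ_apply, Submodule.Quotient.mk_eq_zero]
      exact ⟨π w, rfl⟩
  have hrange : LinearMap.range μ = LinearMap.ker ε := by
    rw [hε, Submodule.ker_liftQ, hkerδ, Submodule.map_sup, hμ, LinearMap.range_comp,
      Submodule.mkQ_map_self, sup_bot_eq]
  have h1 : Nat.card (X ⧸ SX) =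
      Nat.card ((PowerSeries ℤ_[p] ⧸ Ideal.span {g}) ⧸ Sg) * Nat.card (LinearMap.ker ε) := by
    have hc := AddSubgroup.card_eq_card_quotient_mul_card_addSubgroup (ε.toAddMonoidHom.ker)
    rw [Nat.card_congr
      (QuotientAddGroup.quotientKerEquivOfSurjective ε.toAddMonoidHom hεs).toEquiv] at hc
    rw [hc]
    congr 1
  have h2 : Nat.card (LinearMap.ker ε) =
      Nat.card ((PowerSeries ℤ_[p] ⧸ Ideal.span {f}) ⧸ Sf) := by
    rw [← hrange, ← Submodule.range_liftQ Sf μ (le_of_eq hkerμ.symm)]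
    have hc := Nat.card_range_of_injective hνinj
    rw [← hc]
    exact Nat.card_congr (Equiv.subtypeEquivRight fun x => Iff.rfl)
  have h3 : (Nat.card ((PowerSeries ℤ_[p] ⧸ Ideal.span {g}) ⧸ Sg) : ℝ) =
      ‖PowerSeries.constantCoeff (R := ℤ_[p]) g‖⁻¹ := by
    rw [Nat.card_congr (aux_quot_equiv g).some]
    exact aux_padic_card _ hg0
  have h4 : (Nat.card ((PowerSeries ℤ_[p] ⧸ Ideal.span {f}) ⧸ Sf) : ℝ) =
      ‖PowerSeries.constantCoeff (R := ℤ_[p]) f‖⁻¹ := by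
    rw [Nat.card_congr (aux_quot_equiv f).some]
    exact aux_padic_card _ hf0
  rw [hcardker, h1, h2]
  push_cast
  rw [h3, h4, div_one, ← mul_inv, ← norm_mul, mul_comm]
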